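/- Let p be a strictly positive probability distribution on a finite product space with each factor containing a designated element 0. The unique potentials normalized with respect to zero in the Gibbs representation of p are given by the Möbius inversion formula: E_c(x) = −Σ_{b ⊆ c} (−1)^{|c \ b|} log p(x_b, 0_{V \ b}) where (x_b, 0_{V \ b}) denotes the configuration agreeing with x on b and equal to 0 elsewhere. -/

import Mathlib

/-- The configuration `(x_b, 0_{V∖b})` agreeing with `x` on `b` and equal to the
designated element `z` elsewhere. -/
def patch {V : Type*} [DecidableEq V] {X : V → Type*} (z : ∀ v, X v) (b : Finset V)
    (x : ∀ v, X v) : ∀ v, X v :=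
  fun v => if v ∈ b then x v else z v

/-- The Möbius potential
`E_c(x) = −∑_{b ⊆ c} (−1)^{|c∖b|} log p (x_b, 0_{V∖b})`. -/
noncomputable def mobiusE {V : Type*} [DecidableEq V] {X : V → Type*}
    (p : (∀ v, X v) → ℝ) (z : ∀ v, X v) (c : Finset V) (x : ∀ v, X v) : ℝ :=
  -∑ b ∈ c.powerset, (-1 : ℝ) ^ ((c \ b).card) * Real.log (p (patch z b x))

lemma sum_powerset_neg_one_pow_card_real {α : Type*} [DecidableEq α] (s : Finset α) :
    (∑ m ∈ s.powerset, (-1 : ℝ) ^ m.card) = if s = ∅ then 1 else 0 := by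
  have h := Finset.sum_powerset_neg_one_pow_card (x := s)
  have : ((∑ m ∈ s.powerset, (-1 : ℤ) ^ m.card : ℤ) : ℝ)
      = ∑ m ∈ s.powerset, (-1 : ℝ) ^ m.card := by push_cast; rfl
  rw [← this, h]
  split <;> simp

/-- Cancellation lemma: alternating sum over a powerset of a function invariant
under inserting `t` vanishes. -/
lemma alt_sum_cancel {V : Type*} [DecidableEq V] (g : Finset V → ℝ) (c : Finset V)
    (t : V) (ht : t ∈ c) (hg : ∀ b, b ⊆ c.erase t → g (insert t b) = g b) :
    ∑ b ∈ c.powerset, (-1 : ℝ) ^ ((c \ b).card) * g b = 0 := by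
  set s := c.erase t with hs
  have hts : t ∉ s := Finset.notMem_erase t c
  have hc : c = insert t s := (Finset.insert_erase ht).symm
  rw [hc, Finset.sum_powerset_insert hts]
  have key : ∀ b ∈ s.powerset,
      (-1 : ℝ) ^ ((insert t s \ b).card) * g b
        + (-1 : ℝ) ^ ((insert t s \ insert t b).card) * g (insert t b) = 0 := by
    intro b hb
    rw [Finset.mem_powerset] at hb
    have htb : t ∉ b := fun h => hts (hb h)
    have h1 : insert t s \ b = insert t (s \ b) := by
      ext v
      simp only [Finset.mem_sdiff, Finset.mem_insert]
      constructor
      · rintro ⟨h | h, h2⟩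
        · exact Or.inl h
        · exact Or.inr ⟨h, h2⟩
      · rintro (rfl | ⟨h1, h2⟩)
        · exact ⟨Or.inl rfl, htb⟩
        · exact ⟨Or.inr h1, h2⟩
    have h2 : insert t s \ insert t b = s \ b := by
      ext v
      simp only [Finset.mem_sdiff, Finset.mem_insert, not_or]
      constructor
      · rintro ⟨h | h, h2, h3⟩
        · exact absurd h h2
        · exact ⟨h, h3⟩
      · rintro ⟨h1, h2⟩
        exact ⟨Or.inr h1, fun h => hts (h ▸ h1), h2⟩
    have htsb : t ∉ s \ b := fun h => hts (Finset.mem_sdiff.1 h).1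
    rw [h1, h2, Finset.card_insert_of_notMem htsb, hg b hb, pow_succ]
    ring
  rw [← Finset.sum_add_distrib]
  exact Finset.sum_eq_zero key

/-- Möbius inversion over the full powerset. -/
lemma mobius_inversion {V : Type*} [Fintype V] [DecidableEq V] (g : Finset V → ℝ) :
    ∑ c : Finset V, ∑ b ∈ c.powerset, (-1 : ℝ) ^ ((c \ b).card) * g b
      = g Finset.univ := by
  have hps : ∀ c : Finset V, c.powerset = Finset.univ.filter (fun b => b ⊆ c) := by
    intro c; ext b; simp
  calc ∑ c : Finset V, ∑ b ∈ c.powerset, (-1 : ℝ) ^ ((c \ b).card) * g b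
      = ∑ c : Finset V, ∑ b : Finset V,
          (if b ⊆ c then (-1 : ℝ) ^ ((c \ b).card) else 0) * g b := by
        refine Finset.sum_congr rfl fun c _ => ?_
        rw [hps c, Finset.sum_filter]
        refine Finset.sum_congr rfl fun b _ => ?_
        split <;> simp
    _ = ∑ b : Finset V, (∑ c : Finset V,
          (if b ⊆ c then (-1 : ℝ) ^ ((c \ b).card) else 0)) * g b := by
        rw [Finset.sum_comm]
        simp [Finset.sum_mul]
    _ = ∑ b : Finset V, (if b = Finset.univ then 1 else 0) * g b := by
        refine Finset.sum_congr rfl fun b _ => ?_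
        congr 1
        rw [← Finset.sum_filter]
        have := Finset.sum_nbij' (i := fun c : Finset V => c \ b)
          (j := fun d : Finset V => b ∪ d)
          (s := Finset.univ.filter (fun c => b ⊆ c))
          (t := (Finset.univ \ b).powerset)
          (f := fun c => (-1 : ℝ) ^ ((c \ b).card))
          (g := fun d => (-1 : ℝ) ^ d.card)
          (fun c hc => by
            simp only [Finset.mem_powerset]
            exact Finset.sdiff_subset_sdiff (Finset.subset_univ c) le_rfl)
          (fun d hd => by
            simp only [Finset.mem_filter, Finset.mem_univ, true_and]
            exact Finset.subset_union_left)
          (fun c hc => by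
            simp only [Finset.mem_filter] at hc
            exact Finset.union_sdiff_of_subset hc.2)
          (fun d hd => by
            simp only [Finset.mem_powerset] at hd
            exact Finset.union_sdiff_cancel_left
              (Finset.disjoint_left.2 fun a hab had =>
                (Finset.mem_sdiff.1 (hd had)).2 hab))
          (fun c hc => rfl)
        rw [this, sum_powerset_neg_one_pow_card_real]
        have hiff : Finset.univ \ b = ∅ ↔ b = Finset.univ := by
          rw [Finset.sdiff_eq_empty_iff_subset]
          constructor
          · intro h; exact Finset.univ_subset_iff.1 h
          · intro h; rw [h]
        simp only [hiff]
    _ = g Finset.univ := by simp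

/-- The Möbius inversion formula yields potentials that depend only on the
coordinates in `c`, are normalized with respect to zero, and give the Gibbs
representation `p x = (1/Z) exp (−∑_{c ≠ ∅} E_c x)` with `Z = 1 / p(0)`. -/
theorem mobius_potentials_normalized_representation
    {V : Type*} [Fintype V] [DecidableEq V] (X : V → Type*) [∀ v, Fintype (X v)]
    (z : ∀ v, X v) (p : (∀ v, X v) → ℝ)
    (hpos : ∀ x, 0 < p x) (hsum : ∑ x, p x = 1) :
    (∀ (c : Finset V) (x y : ∀ v, X v), (∀ v ∈ c, x v = y v) →
        mobiusE p z c x = mobiusE p z c y) ∧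
    (∀ (c : Finset V) (x : ∀ v, X v), (∃ t ∈ c, x t = z t) → mobiusE p z c x = 0) ∧
    (∀ x, p x = (1 / (1 / p z)) *
        Real.exp (-∑ c ∈ Finset.univ.filter (fun c : Finset V => c ≠ ∅),
          mobiusE p z c x)) := by
  refine ⟨?_, ?_, ?_⟩
  · -- locality
    intro c x y hxy
    unfold mobiusE
    congr 1
    refine Finset.sum_congr rfl fun b hb => ?_
    rw [Finset.mem_powerset] at hb
    have : patch z b x = patch z b y := by
      funext v
      unfold patch
      by_cases h : v ∈ b
      · simp [h, hxy v (hb h)]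
      · simp [h]
    rw [this]
  · -- normalization
    rintro c x ⟨t, ht, hxt⟩
    unfold mobiusE
    rw [neg_eq_zero]
    refine alt_sum_cancel _ c t ht fun b hb => ?_
    have htb : t ∉ b := fun h => Finset.notMem_erase t c (hb h)
    have hpatch : patch z (insert t b) x = patch z b x := by
      funext v
      unfold patch
      by_cases hv : v = t
      · subst hv
        simp [htb, hxt]
      · simp [Finset.mem_insert, hv]
    rw [hpatch]
  · -- Gibbs representation
    intro x
    set g : Finset V → ℝ := fun b => Real.log (p (patch z b x)) with hg
    have hx : patch z Finset.univ x = x := by funext v; simp [patch]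
    have hz : patch z (∅ : Finset V) x = z := by funext v; simp [patch]
    have hall : ∑ c : Finset V, mobiusE p z c x = -Real.log (p x) := by
      have h1 := mobius_inversion g
      have h2 : g Finset.univ = Real.log (p x) := by
        show Real.log (p (patch z Finset.univ x)) = Real.log (p x)
        rw [hx]
      have h3 : ∑ c : Finset V, mobiusE p z c x
          = -∑ c : Finset V, ∑ b ∈ c.powerset, (-1 : ℝ) ^ ((c \ b).card) * g b := by
        simp only [mobiusE]
        exact Finset.sum_neg_distrib _
      rw [h3, h1, h2]
    have hempty : mobiusE p z (∅ : Finset V) x = -Real.log (p z) := by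
      unfold mobiusE
      simp [hz]
    have hsplit : ∑ c ∈ Finset.univ.filter (fun c : Finset V => c ≠ ∅),
        mobiusE p z c x = -Real.log (p x) + Real.log (p z) := by
      have : ∑ c : Finset V, mobiusE p z c x
          = mobiusE p z (∅ : Finset V) x
            + ∑ c ∈ Finset.univ.filter (fun c : Finset V => c ≠ ∅),
              mobiusE p z c x := by
        rw [← Finset.sum_filter_add_sum_filter_not Finset.univ
          (fun c : Finset V => c = ∅)]
        congr 1
        · rw [Finset.sum_filter]
          rw [Finset.sum_ite_eq' Finset.univ (∅ : Finset V) (fun c => mobiusE p z c x)]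
          simp
      rw [hempty] at this
      linarith [hall, this]
    rw [hsplit]
    rw [one_div_one_div]
    rw [neg_add, neg_neg, Real.exp_add, Real.exp_log (hpos x), Real.exp_neg,
      Real.exp_log (hpos z)]
    rw [mul_comm (p z), mul_assoc, inv_mul_cancel₀ (hpos z).ne', mul_one]
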